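/- arXiv:math/0501013 — 8 statements merged into one kernel-verified Lean document; each statement's English description precedes it below -/
import Mathlib

section
/- Let A be a complex normed algebra, X a Banach A-bimodule, and T = {λ ∈ ℂ : |λ| = 1}. Suppose f : A → X with f(0) = 0 and φ : A × A → [0,∞) satisfy φ̃(a,b) := (1/2)·Σ_{n=0}^∞ 2^{-n} φ(2ⁿa, 2ⁿb) < ∞ and ‖f(λa+λb) − λf(a) − λf(b)‖ ≤ φ(a,b) for all λ ∈ T, a,b ∈ A, and let d(a) = lim_{n→∞} 2^{-n}f(2ⁿa) be the associated additive map satisfying ‖f(a) − d(a)‖ ≤ φ̃(a,a). If f and the function ψ(a) := φ̃(a,a) are both continuous at a single point a₀ ∈ A, then d is continuous on all of A. -/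
open Filter Topology

/-- Theorem 2.1(ii) of the paper: if the approximately additive map `f` and the
control function `ψ(a) = φ̃(a,a)` are both continuous at a single point `a₀`, then
the associated additive map `d(a) = lim 2⁻ⁿ f(2ⁿ a)` is continuous on all of `A`. -/
theorem continuity_of_approximating_additive_map
    {A : Type*} [NonUnitalNormedRing A] [NormedSpace ℂ A]
    [IsScalarTower ℂ A A] [SMulCommClass ℂ A A]
    {X : Type*} [NormedAddCommGroup X] [NormedSpace ℂ X] [CompleteSpace X]
    (f : A → X) (hf0 : f 0 = 0)
    (φ : A → A → ℝ) (hφ_nonneg : ∀ a b, 0 ≤ φ a b)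
    (hφ_sum : ∀ a b : A,
      Summable fun n : ℕ => ((2 : ℝ) ^ n)⁻¹ * φ ((2 : ℂ) ^ n • a) ((2 : ℂ) ^ n • b))
    (φt : A → A → ℝ)
    (hφt : ∀ a b : A, φt a b =
      (1 / 2) * ∑' n : ℕ, ((2 : ℝ) ^ n)⁻¹ * φ ((2 : ℂ) ^ n • a) ((2 : ℂ) ^ n • b))
    (hf_add : ∀ l : ℂ, ‖l‖ = 1 → ∀ a b : A,
      ‖f (l • a + l • b) - l • f a - l • f b‖ ≤ φ a b)
    -- the associated additive map `d`
    (d : A → X)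
    (hd_lim : ∀ a : A, Tendsto (fun n : ℕ => ((2 : ℂ) ^ n)⁻¹ • f ((2 : ℂ) ^ n • a))
      atTop (𝓝 (d a)))
    (hd_add : ∀ a b : A, d (a + b) = d a + d b)
    (hd_bound : ∀ a : A, ‖f a - d a‖ ≤ φt a a)
    -- continuity of `f` and `ψ(a) = φ̃(a,a)` at a single point `a₀`
    (a₀ : A) (hf_cont : ContinuousAt f a₀)
    (hψ_cont : ContinuousAt (fun a : A => φt a a) a₀) :
    Continuous d := by
  -- d 0 = 0
  have d0 : d 0 = 0 := by
    have h := hd_add 0 0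
    rw [add_zero] at h
    exact left_eq_add.mp h
  -- d (n • a) = n • d a
  have dnsmul : ∀ (n : ℕ) (a : A), d (n • a) = n • d a := by
    intro n a
    induction n with
    | zero => simpa using d0
    | succ k ih => rw [succ_nsmul, hd_add, ih, succ_nsmul]
  -- ψ is nonnegative
  have ψnn : ∀ a : A, 0 ≤ φt a a := by
    intro a
    rw [hφt]
    have : 0 ≤ ∑' n : ℕ, ((2 : ℝ) ^ n)⁻¹ * φ ((2 : ℂ) ^ n • a) ((2 : ℂ) ^ n • a) :=
      tsum_nonneg fun n => mul_nonneg (by positivity) (hφ_nonneg _ _)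
    linarith
  -- key estimate
  have key : ∀ a : A, ‖d a - d a₀‖ ≤ φt a a + ‖f a - f a₀‖ + φt a₀ a₀ := by
    intro a
    have h1 := hd_bound a
    have h2 := hd_bound a₀
    have heq : d a - d a₀ = -(f a - d a) + (f a - f a₀) + (f a₀ - d a₀) := by abel
    calc ‖d a - d a₀‖ = ‖-(f a - d a) + (f a - f a₀) + (f a₀ - d a₀)‖ := by rw [heq]
      _ ≤ ‖-(f a - d a) + (f a - f a₀)‖ + ‖f a₀ - d a₀‖ := norm_add_le _ _
      _ ≤ ‖-(f a - d a)‖ + ‖f a - f a₀‖ + ‖f a₀ - d a₀‖ := by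
          gcongr; exact norm_add_le _ _
      _ = ‖f a - d a‖ + ‖f a - f a₀‖ + ‖f a₀ - d a₀‖ := by rw [norm_neg]
      _ ≤ φt a a + ‖f a - f a₀‖ + φt a₀ a₀ := by gcongr
  -- local boundedness of d near 0
  set M : ℝ := 2 * φt a₀ a₀ + 2 with hM
  obtain ⟨δ₁, hδ₁, hψδ⟩ := Metric.continuousAt_iff.mp hψ_cont 1 one_pos
  obtain ⟨δ₂, hδ₂, hfδ⟩ := Metric.continuousAt_iff.mp hf_cont 1 one_pos
  set δ : ℝ := min δ₁ δ₂ with hδdef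
  have hδ : 0 < δ := lt_min hδ₁ hδ₂
  have hB : ∀ h : A, ‖h‖ < δ → ‖d h‖ ≤ M := by
    intro h hh
    have hdist : dist (a₀ + h) a₀ < δ := by
      rw [dist_eq_norm]
      simpa using hh
    have hψ' := hψδ (lt_of_lt_of_le hdist (min_le_left _ _))
    have hf' := hfδ (lt_of_lt_of_le hdist (min_le_right _ _))
    rw [Real.dist_eq] at hψ'
    rw [dist_eq_norm] at hf'
    have hdh : d h = d (a₀ + h) - d a₀ := by rw [hd_add]; abel
    have hk := key (a₀ + h)
    have hψ'' : φt (a₀ + h) (a₀ + h) ≤ φt a₀ a₀ + 1 := by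
      have := abs_sub_le_iff.mp hψ'.le
      linarith [this.1]
    rw [hdh]
    calc ‖d (a₀ + h) - d a₀‖ ≤ φt (a₀ + h) (a₀ + h) + ‖f (a₀ + h) - f a₀‖ + φt a₀ a₀ := hk
      _ ≤ (φt a₀ a₀ + 1) + 1 + φt a₀ a₀ := by gcongr
      _ = M := by rw [hM]; ring
  have hM0 : 0 ≤ M := by have := ψnn a₀; rw [hM]; linarith
  -- continuity at 0
  have cont0 : Tendsto d (𝓝 0) (𝓝 0) := by
    rw [Metric.tendsto_nhds_nhds]
    intro ε hε
    obtain ⟨n, hn⟩ := pow_unbounded_of_one_lt (M / ε) (one_lt_two (α := ℝ))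
    have h2n : (0 : ℝ) < 2 ^ n := by positivity
    refine ⟨δ / 2 ^ n, by positivity, ?_⟩
    intro x hx
    rw [dist_zero_right] at hx ⊢
    have hsmall : ‖(2 ^ n : ℕ) • x‖ < δ := by
      rw [← Nat.cast_smul_eq_nsmul ℝ, norm_smul]
      have : ‖((2 ^ n : ℕ) : ℝ)‖ = (2 : ℝ) ^ n := by
        simp [Real.norm_natCast]
      rw [this]
      calc (2 : ℝ) ^ n * ‖x‖ < 2 ^ n * (δ / 2 ^ n) := by
            exact (mul_lt_mul_iff_right₀ h2n).mpr hx
        _ = δ := by field_simp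
    have hbd := hB _ hsmall
    rw [dnsmul, ← Nat.cast_smul_eq_nsmul ℝ, norm_smul] at hbd
    have hcast : ‖((2 ^ n : ℕ) : ℝ)‖ = (2 : ℝ) ^ n := by simp [Real.norm_natCast]
    rw [hcast] at hbd
    have : ‖d x‖ ≤ M / 2 ^ n := by
      rw [le_div_iff₀ h2n]
      linarith [hbd]
    calc ‖d x‖ ≤ M / 2 ^ n := this
      _ < ε := by
        rw [div_lt_iff₀ h2n]
        have : M < ε * 2 ^ n := by
          have := (div_lt_iff₀ hε).mp hn
          linarith
        linarith
  -- continuity everywhere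
  rw [continuous_iff_continuousAt]
  intro a
  have hrepr : ∀ x : A, d x = d (x - a) + d a := by
    intro x
    rw [← hd_add, sub_add_cancel]
  have hsub : Tendsto (fun x : A => x - a) (𝓝 a) (𝓝 0) := by
    have := (continuous_id.sub (continuous_const (y := a))).tendsto a
    simp only [Pi.sub_apply, id_eq, sub_self] at this
    exact this
  have h1 : Tendsto (fun x : A => d (x - a) + d a) (𝓝 a) (𝓝 (d a)) := by
    have := (cont0.comp hsub).add (tendsto_const_nhds (x := d a))
    simpa using this
  unfold ContinuousAt
  exact h1.congr fun x => (hrepr x).symm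
end

section
/- Let A be a complex Banach algebra and let σ, τ be bounded algebra endomorphisms of A. If A is (σ-τ)-contractible, then A is approximately (σ-τ)-contractible: for every Banach A-bimodule X and every approximate (σ-τ)-derivation f : A → X there exist β > 0 and x ∈ X such that ‖xσ(a) − τ(a)x − f(a)‖ ≤ β for all a ∈ A. -/
open Filter Topology

/-- A Banach bimodule over a complex Banach algebra `A`:
a complex Banach space `X` with continuous bilinear left and right actions of `A`
which are associative and commute with each other (`a (x b) = (a x) b`). -/
structure BanachBimodule (A : Type*) [NonUnitalNormedRing A] [NormedSpace ℂ A]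
    (X : Type*) [NormedAddCommGroup X] [NormedSpace ℂ X] [CompleteSpace X] where
  lsmul : A →L[ℂ] X →L[ℂ] X
  rsmul : A →L[ℂ] X →L[ℂ] X
  lsmul_mul : ∀ (a b : A) (x : X), lsmul (a * b) x = lsmul a (lsmul b x)
  rsmul_mul : ∀ (a b : A) (x : X), rsmul (a * b) x = rsmul b (rsmul a x)
  middle : ∀ (a b : A) (x : X), lsmul a (rsmul b x) = rsmul b (lsmul a x)

/-- `f : A → X` is an approximate `(σ-τ)`-derivation: `f 0 = 0`, `f` is continuous at
some point, and for some `α > 0` it is approximately `T`-additive and approximately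
satisfies the `(σ-τ)`-derivation identity, within `α`. -/
def IsApproxSigmaTauDerivation {A : Type*} [NonUnitalNormedRing A] [NormedSpace ℂ A]
    {X : Type*} [NormedAddCommGroup X] [NormedSpace ℂ X] [CompleteSpace X]
    (M : BanachBimodule A X) (σ τ : A →L[ℂ] A) (f : A → X) : Prop :=
  f 0 = 0 ∧ (∃ a₀ : A, ContinuousAt f a₀) ∧
    ∃ α : ℝ, 0 < α ∧
      (∀ l : ℂ, ‖l‖ = 1 → ∀ a b : A,
        ‖f (l • a + l • b) - l • f a - l • f b‖ ≤ α) ∧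
      (∀ a b : A, ‖f (a * b) - M.rsmul (σ b) (f a) - M.lsmul (τ a) (f b)‖ ≤ α)

lemma lim_eq_of_norm_sub_le' {X : Type*} [NormedAddCommGroup X] {u v : ℕ → X} {x y : X} {C : ℝ}
    (hu : Filter.Tendsto u atTop (𝓝 x)) (hv : Filter.Tendsto v atTop (𝓝 y))
    (h : ∀ n, ‖u n - v n‖ ≤ C * (1/2 : ℝ) ^ n) : x = y := by
  have h0 : Tendsto (fun n => u n - v n) atTop (𝓝 0) :=
    squeeze_zero_norm h (by
      simpa using (tendsto_pow_atTop_nhds_zero_of_lt_one (by norm_num : (0:ℝ) ≤ 1/2)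
        (by norm_num : (1/2 : ℝ) < 1)).const_mul C)
  exact sub_eq_zero.mp (tendsto_nhds_unique (hu.sub hv) h0)

/-- Half of Theorem 3.1 of the paper: if the complex Banach algebra `A` is
`(σ-τ)`-contractible (every bounded `(σ-τ)`-derivation into any Banach `A`-bimodule
is `(σ-τ)`-inner), then `A` is approximately `(σ-τ)`-contractible. -/
theorem approx_contractible_of_contractible
    {A : Type*} [NonUnitalNormedRing A] [NormedSpace ℂ A]
    [IsScalarTower ℂ A A] [SMulCommClass ℂ A A] [CompleteSpace A]
    (σ τ : A →L[ℂ] A)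
    (hσ : ∀ a b : A, σ (a * b) = σ a * σ b) (hτ : ∀ a b : A, τ (a * b) = τ a * τ b)
    (hcontr : ∀ (X : Type) [NormedAddCommGroup X] [NormedSpace ℂ X] [CompleteSpace X]
      (M : BanachBimodule A X) (d : A →L[ℂ] X),
      (∀ a b : A, d (a * b) = M.rsmul (σ b) (d a) + M.lsmul (τ a) (d b)) →
      ∃ x : X, ∀ a : A, d a = M.rsmul (σ a) x - M.lsmul (τ a) x) :
    ∀ (X : Type) [NormedAddCommGroup X] [NormedSpace ℂ X] [CompleteSpace X]
      (M : BanachBimodule A X) (f : A → X),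
      IsApproxSigmaTauDerivation M σ τ f →
      ∃ β : ℝ, 0 < β ∧ ∃ x : X, ∀ a : A,
        ‖M.rsmul (σ a) x - M.lsmul (τ a) x - f a‖ ≤ β := by
  intro X _ _ _ M f hf
  obtain ⟨hf0, ⟨a₀, hconta⟩, α, hα, hadd, hmul⟩ := hf
  set g : A → ℕ → X := fun a n => ((2:ℂ)^n)⁻¹ • f ((2:ℂ)^n • a) with hg
  have hnorm2 : ∀ n : ℕ, ‖((2:ℂ)^n)⁻¹‖ = (1/2 : ℝ)^n := by
    intro n
    rw [norm_inv, norm_pow]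
    rw [show ‖(2:ℂ)‖ = 2 by norm_num, ← inv_pow]
    norm_num
  have hstep : ∀ (l : ℂ), ‖l‖ = 1 → ∀ c : A,
      ‖f ((2:ℂ) • (l • c)) - l • f c - l • f c‖ ≤ α := by
    intro l hl c
    have := hadd l hl c c
    rwa [← two_smul ℂ (l • c)] at this
  -- Cauchy estimate
  have key : ∀ (a : A) (n : ℕ), dist (g a n) (g a (n+1)) ≤ (α/2) * (1/2 : ℝ)^n := by
    intro a n
    have h1 := hstep 1 (by simp) ((2:ℂ)^n • a)
    simp only [one_smul] at h1
    rw [dist_eq_norm]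
    have earg : (2:ℂ)^(n+1) • a = (2:ℂ) • ((2:ℂ)^n • a) := by
      rw [smul_smul, ← pow_succ']
    have e1 : g a n - g a (n+1)
        = ((2:ℂ)^(n+1))⁻¹ • -(f ((2:ℂ) • ((2:ℂ)^n • a)) - f ((2:ℂ)^n • a) - f ((2:ℂ)^n • a)) := by
      simp only [hg, earg]
      match_scalars <;> (field_simp; try ring)
    rw [e1, norm_smul, hnorm2, norm_neg]
    calc (1/2 : ℝ)^(n+1) * ‖f ((2:ℂ) • ((2:ℂ)^n • a)) - f ((2:ℂ)^n • a) - f ((2:ℂ)^n • a)‖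
        ≤ (1/2 : ℝ)^(n+1) * α := mul_le_mul_of_nonneg_left h1 (by positivity)
      _ = (α/2) * (1/2 : ℝ)^n := by ring
  have hcau : ∀ a : A, CauchySeq (g a) := fun a =>
    cauchySeq_of_le_geometric (1/2) (α/2) (by norm_num) (key a)
  set D : A → X := fun a => limUnder atTop (g a) with hD
  have htend : ∀ a : A, Tendsto (g a) atTop (𝓝 (D a)) := fun a => (hcau a).tendsto_limUnder
  -- D is within α of f
  have hDf : ∀ a : A, ‖f a - D a‖ ≤ α := by
    intro a
    have h1 := dist_le_of_le_geometric_of_tendsto₀ (1/2) (α/2) (by norm_num) (key a) (htend a)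
    have e : g a 0 = f a := by simp [hg]
    rw [e, dist_eq_norm] at h1
    calc ‖f a - D a‖ ≤ (α/2) / (1 - 1/2) := h1
      _ = α := by ring
  -- D is additive
  have hDadd : ∀ a b : A, D (a + b) = D a + D b := by
    intro a b
    refine lim_eq_of_norm_sub_le' (C := α) (htend (a+b)) ((htend a).add (htend b)) ?_
    intro n
    have h1 := hadd 1 (by simp) ((2:ℂ)^n • a) ((2:ℂ)^n • b)
    simp only [one_smul] at h1
    have e : g (a+b) n - (g a n + g b n)
        = ((2:ℂ)^n)⁻¹ • (f ((2:ℂ)^n • a + (2:ℂ)^n • b) - f ((2:ℂ)^n • a) - f ((2:ℂ)^n • b)) := by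
      simp only [hg, smul_add]
      match_scalars <;> (field_simp; try ring)
    rw [e, norm_smul, hnorm2, mul_comm α]
    exact mul_le_mul_of_nonneg_left h1 (by positivity)
  -- D is homogeneous for unit scalars
  have hDsmul1 : ∀ (l : ℂ), ‖l‖ = 1 → ∀ a : A, D (l • a) = l • D a := by
    intro l hl a
    refine lim_eq_of_norm_sub_le' (C := α)
      ((htend (l • a)).comp (tendsto_add_atTop_nat 1)) ((htend a).const_smul l) ?_
    intro n
    simp only [Function.comp_apply]
    have h1 := hstep l hl ((2:ℂ)^n • a)
    have earg : (2:ℂ)^(n+1) • (l • a) = (2:ℂ) • (l • ((2:ℂ)^n • a)) := by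
      simp only [smul_smul]
      congr 1
      ring
    have e : g (l • a) (n + 1) - l • g a n
        = ((2:ℂ)^(n+1))⁻¹ • (f ((2:ℂ) • (l • ((2:ℂ)^n • a))) - l • f ((2:ℂ)^n • a)
            - l • f ((2:ℂ)^n • a)) := by
      simp only [hg, earg]
      match_scalars <;> (field_simp; try ring)
    rw [e, norm_smul, hnorm2]
    have h2 : (1/2 : ℝ)^(n+1) ≤ (1/2 : ℝ)^n :=
      pow_le_pow_of_le_one (by norm_num) (by norm_num) (Nat.le_succ n)
    calc (1/2 : ℝ)^(n+1) * ‖f ((2:ℂ) • (l • ((2:ℂ)^n • a))) - l • f ((2:ℂ)^n • a)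
            - l • f ((2:ℂ)^n • a)‖
        ≤ (1/2 : ℝ)^n * α := by
          apply mul_le_mul h2 h1 (norm_nonneg _) (by positivity)
      _ = α * (1/2 : ℝ)^n := by ring
  -- D satisfies the derivation identity
  have hDmul : ∀ a b : A, D (a * b) = M.rsmul (σ b) (D a) + M.lsmul (τ a) (D b) := by
    intro a b
    have h2n : Tendsto (fun n : ℕ => 2*n) atTop atTop :=
      tendsto_atTop_mono (fun n => Nat.le_mul_of_pos_left n two_pos) tendsto_id
    refine lim_eq_of_norm_sub_le' (C := α) ((htend (a*b)).comp h2n)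
      ((((M.rsmul (σ b)).continuous.tendsto _).comp (htend a)).add
        (((M.lsmul (τ a)).continuous.tendsto _).comp (htend b))) ?_
    intro n
    simp only [Function.comp_apply]
    have h1 := hmul ((2:ℂ)^n • a) ((2:ℂ)^n • b)
    have earg : ((2:ℂ)^n • a) * ((2:ℂ)^n • b) = (2:ℂ)^(2*n) • (a*b) := by
      rw [smul_mul_smul_comm, ← pow_add, two_mul]
    rw [earg] at h1
    have e : g (a*b) (2*n)
          - (M.rsmul (σ b) (g a n) + M.lsmul (τ a) (g b n))
        = ((2:ℂ)^(2*n))⁻¹ • (f ((2:ℂ)^(2*n) • (a*b))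
            - M.rsmul (σ ((2:ℂ)^n • b)) (f ((2:ℂ)^n • a))
            - M.lsmul (τ ((2:ℂ)^n • a)) (f ((2:ℂ)^n • b))) := by
      simp only [hg, map_smul, ContinuousLinearMap.smul_apply]
      match_scalars <;> (field_simp; try ring)
    rw [e, norm_smul, hnorm2]
    have h2 : (1/2 : ℝ)^(2*n) ≤ (1/2 : ℝ)^n :=
      pow_le_pow_of_le_one (by norm_num) (by norm_num) (by omega)
    calc (1/2 : ℝ)^(2*n) * ‖f ((2:ℂ)^(2*n) • (a*b))
            - M.rsmul (σ ((2:ℂ)^n • b)) (f ((2:ℂ)^n • a))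
            - M.lsmul (τ ((2:ℂ)^n • a)) (f ((2:ℂ)^n • b))‖
        ≤ (1/2 : ℝ)^n * α := mul_le_mul h2 h1 (norm_nonneg _) (by positivity)
      _ = α * (1/2 : ℝ)^n := by ring
  -- D 0 = 0
  have hD0 : D 0 = 0 := by
    have e : g 0 = fun _ : ℕ => (0:X) := by funext n; simp [hg, hf0]
    have := htend 0
    rw [e] at this
    exact (tendsto_nhds_unique this tendsto_const_nhds)
  -- D is locally bounded near 0
  obtain ⟨δ, hδ, hball⟩ := Metric.continuousAt_iff.mp hconta 1 one_pos
  have hDbound : ∀ h : A, ‖h‖ < δ → ‖D h‖ ≤ 2*α + 1 := by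
    intro h hh
    have h2 : D h = (D (a₀+h) - f (a₀+h)) + (f (a₀+h) - f a₀) + (f a₀ - D a₀) := by
      rw [hDadd a₀ h]; abel
    have b1 : ‖D (a₀+h) - f (a₀+h)‖ ≤ α := by rw [norm_sub_rev]; exact hDf _
    have b3 := hDf a₀
    have b2 : ‖f (a₀+h) - f a₀‖ ≤ 1 := by
      have := hball (show dist (a₀ + h) a₀ < δ by simpa [dist_eq_norm] using hh)
      rw [dist_eq_norm] at this; linarith
    calc ‖D h‖ ≤ ‖D (a₀+h) - f (a₀+h)‖ + ‖f (a₀+h) - f a₀‖ + ‖f a₀ - D a₀‖ := by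
          rw [h2]; exact (norm_add_le _ _).trans (by gcongr; exact norm_add_le _ _)
      _ ≤ 2*α + 1 := by linarith
  -- doubling
  have hhomn : ∀ (n : ℕ) (x : A), D ((2:ℂ)^n • x) = (2:ℂ)^n • D x := by
    intro n
    induction n with
    | zero => intro x; simp
    | succ n ih =>
      intro x
      have e : (2:ℂ)^(n+1) • x = (2:ℂ)^n • x + (2:ℂ)^n • x := by
        rw [← two_smul ℂ ((2:ℂ)^n • x), smul_smul, ← pow_succ']
      rw [e, hDadd, ih, ← two_smul ℂ ((2:ℂ)^n • D x), smul_smul, ← pow_succ']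
  -- continuity at 0
  have hcont0 : ContinuousAt D 0 := by
    rw [Metric.continuousAt_iff]
    intro ε hε
    obtain ⟨n, hn⟩ : ∃ n : ℕ, (1/2 : ℝ)^n < ε / (2*α+1) :=
      exists_pow_lt_of_lt_one (by positivity) (by norm_num)
    refine ⟨δ * (1/2:ℝ)^n, by positivity, ?_⟩
    intro x hx
    rw [dist_zero_right] at hx
    rw [hD0, dist_zero_right]
    have hxn : ‖(2:ℂ)^n • x‖ < δ := by
      rw [norm_smul, norm_pow]
      have : ‖(2:ℂ)‖ = 2 := by norm_num
      rw [this]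
      calc (2:ℝ)^n * ‖x‖ < (2:ℝ)^n * (δ * (1/2:ℝ)^n) := by
            apply mul_lt_mul_of_pos_left hx (by positivity)
        _ = δ := by
            rw [div_pow, one_pow]
            field_simp
    have hb := hDbound _ hxn
    rw [hhomn, norm_smul, norm_pow] at hb
    have h2 : ‖(2:ℂ)‖ = 2 := by norm_num
    rw [h2] at hb
    have hpow : (0:ℝ) < (2:ℝ)^n := by positivity
    have : ‖D x‖ ≤ (2*α+1) * (1/2:ℝ)^n := by
      rw [div_pow, one_pow, mul_one_div, le_div_iff₀ hpow, mul_comm]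
      exact hb
    calc ‖D x‖ ≤ (2*α+1) * (1/2:ℝ)^n := this
      _ < (2*α+1) * (ε / (2*α+1)) := by
          apply mul_lt_mul_of_pos_left hn (by positivity)
      _ = ε := by field_simp
  -- D is continuous
  set Dhom : A →+ X := AddMonoidHom.mk' D hDadd with hDhom
  have hcontD : Continuous D := continuous_of_continuousAt_zero Dhom hcont0
  -- full ℂ-linearity
  have hC : ∀ (z : ℂ) (x : A), D (z • x) = z • D x := by
    intro z x
    rcases eq_or_ne z 0 with rfl | hz
    · simpa using hD0
    · have hz' : (0:ℝ) < ‖z‖ := norm_pos_iff.mpr hz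
      have hz2 : ((‖z‖ : ℝ) : ℂ) ≠ 0 := by exact_mod_cast hz'.ne'
      have hu : ‖z / (‖z‖ : ℂ)‖ = 1 := by
        rw [norm_div, Complex.norm_real, Real.norm_of_nonneg (norm_nonneg z),
          div_self hz'.ne']
      have hsc : ((‖z‖ : ℝ) : ℂ) * (z / (‖z‖ : ℂ)) = z := by
        rw [mul_div_assoc', mul_comm, mul_div_assoc, div_self hz2, mul_one]
      have hr : ∀ (r : ℝ) (y : A), D (r • y) = r • D y :=
        fun r y => map_real_smul Dhom hcontD r y
      have e : z • x = (‖z‖ : ℝ) • ((z / (‖z‖ : ℂ)) • x) := by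
        rw [← Complex.coe_smul, smul_smul, hsc]
      rw [e, hr, hDsmul1 _ hu, ← Complex.coe_smul, smul_smul, hsc]
  -- build the continuous linear map
  set DCLM : A →L[ℂ] X := ⟨{ toFun := D, map_add' := hDadd, map_smul' := hC }, hcontD⟩ with hDCLM
  obtain ⟨x, hx⟩ := hcontr X M DCLM (fun a b => hDmul a b)
  refine ⟨α, hα, x, fun a => ?_⟩
  have h3 : D a = M.rsmul (σ a) x - M.lsmul (τ a) x := hx a
  rw [← h3, norm_sub_rev]
  exact hDf a
end

section
/- Let A be a complex Banach algebra and let σ, τ be bounded algebra endomorphisms of A. If A is approximately (σ-τ)-contractible (for every Banach A-bimodule X and every approximate (σ-τ)-derivation f : A → X there exist β > 0 and x ∈ X such that ‖xσ(a) − τ(a)x − f(a)‖ ≤ β for all a ∈ A), then A is (σ-τ)-contractible: for every Banach A-bimodule X, every bounded (σ-τ)-derivation d : A → X is (σ-τ)-inner. -/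
open Filter Topology

/-- The converse half of Theorem 3.1 of the paper: if the complex Banach algebra `A`
is approximately `(σ-τ)`-contractible (every approximate `(σ-τ)`-derivation into any
Banach `A`-bimodule is within a uniform bound of an inner one), then `A` is
`(σ-τ)`-contractible: every bounded `(σ-τ)`-derivation is `(σ-τ)`-inner. -/
theorem contractible_of_approx_contractible
    {A : Type*} [NonUnitalNormedRing A] [NormedSpace ℂ A]
    [IsScalarTower ℂ A A] [SMulCommClass ℂ A A] [CompleteSpace A]
    (σ τ : A →L[ℂ] A)
    (hσ : ∀ a b : A, σ (a * b) = σ a * σ b) (hτ : ∀ a b : A, τ (a * b) = τ a * τ b)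
    (happrox : ∀ (X : Type) [NormedAddCommGroup X] [NormedSpace ℂ X] [CompleteSpace X]
      (M : BanachBimodule A X) (f : A → X),
      IsApproxSigmaTauDerivation M σ τ f →
      ∃ β : ℝ, 0 < β ∧ ∃ x : X, ∀ a : A,
        ‖M.rsmul (σ a) x - M.lsmul (τ a) x - f a‖ ≤ β) :
    ∀ (X : Type) [NormedAddCommGroup X] [NormedSpace ℂ X] [CompleteSpace X]
      (M : BanachBimodule A X) (d : A →L[ℂ] X),
      (∀ a b : A, d (a * b) = M.rsmul (σ b) (d a) + M.lsmul (τ a) (d b)) →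
      ∃ x : X, ∀ a : A, d a = M.rsmul (σ a) x - M.lsmul (τ a) x := by
  intro X _ _ _ M d hd
  obtain ⟨β, hβ, x, hx⟩ := happrox X M d ⟨map_zero d, ⟨0, d.continuous.continuousAt⟩,
    1, one_pos,
    fun l _ a b => by simp [map_add, map_smul],
    fun a b => by rw [hd a b, add_sub_cancel_left, sub_self, norm_zero]; exact zero_le_one⟩
  refine ⟨x, fun a => ?_⟩
  have key : ∀ ε : ℝ, 0 < ε → ‖M.rsmul (σ a) x - M.lsmul (τ a) x - d a‖ ≤ ε := by
    intro ε hε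
    obtain ⟨n, hn⟩ := exists_nat_gt (β / ε)
    have hn0 : 0 < (n : ℝ) := lt_trans (div_pos hβ hε) hn
    have h := hx ((n : ℂ) • a)
    have heq : M.rsmul (σ ((n : ℂ) • a)) x - M.lsmul (τ ((n : ℂ) • a)) x - d ((n : ℂ) • a)
        = (n : ℂ) • (M.rsmul (σ a) x - M.lsmul (τ a) x - d a) := by
      simp [map_smul, smul_sub]
    rw [heq, norm_smul] at h
    have : ‖(n : ℂ)‖ = (n : ℝ) := by simp
    rw [this] at h
    have hβn : β < (n : ℝ) * ε := (div_lt_iff₀ hε).mp hn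
    have h2 : (n : ℝ) * ‖M.rsmul (σ a) x - M.lsmul (τ a) x - d a‖ < (n : ℝ) * ε :=
      lt_of_le_of_lt h hβn
    exact le_of_lt ((mul_lt_mul_iff_right₀ hn0).mp h2)
  have h0 : ‖M.rsmul (σ a) x - M.lsmul (τ a) x - d a‖ ≤ 0 :=
    le_of_forall_pos_le_add (by intro ε hε; simpa using key ε hε)
  have := norm_le_zero_iff.mp h0
  have h := sub_eq_zero.mp this
  rw [← h]
end

section
/- Let A be a complex Banach algebra and let σ, τ be bounded algebra endomorphisms of A. Then A is approximately (σ-τ)-amenable if and only if A is (σ-τ)-amenable. Here (σ-τ)-amenability means: for every Banach A-bimodule X, every bounded (σ-τ)-derivation d : A → X* into the dual bimodule X* is (σ-τ)-inner; and approximate (σ-τ)-amenability means: for every Banach A-bimodule X and every approximate (σ-τ)-derivation f : A → X* there exist β > 0 and x ∈ X* such that ‖xσ(a) − τ(a)x − f(a)‖ ≤ β for all a ∈ A. -/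
open Filter Topology

/-- The dual Banach `A`-bimodule structure on `X* = X →L[ℂ] ℂ`, with the actions
`(a·φ)(x) = φ(x·a)` and `(φ·a)(x) = φ(a·x)`. -/
noncomputable def BanachBimodule.dual {A : Type*} [NonUnitalNormedRing A]
    [NormedSpace ℂ A] {X : Type*} [NormedAddCommGroup X] [NormedSpace ℂ X]
    [CompleteSpace X] (M : BanachBimodule A X) :
    BanachBimodule A (X →L[ℂ] ℂ) where
  lsmul := ((ContinuousLinearMap.compL ℂ X X ℂ).flip).comp M.rsmul
  rsmul := ((ContinuousLinearMap.compL ℂ X X ℂ).flip).comp M.lsmul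
  lsmul_mul := by
    intro a b φ
    ext x
    simp [M.rsmul_mul]
  rsmul_mul := by
    intro a b φ
    ext x
    simp [M.lsmul_mul]
  middle := by
    intro a b φ
    ext x
    simp [M.middle]

lemma my_norm_eq_zero_of_forall_mul_le {Y : Type*} [NormedAddCommGroup Y] (y : Y) (C : ℝ)
    (h : ∀ n : ℕ, 1 ≤ n → (n : ℝ) * ‖y‖ ≤ C) : y = 0 := by
  by_contra hy
  have hny : 0 < ‖y‖ := norm_pos_iff.2 hy
  obtain ⟨n, hn⟩ := exists_nat_gt (C / ‖y‖)
  have h1 : ((max n 1 : ℕ) : ℝ) * ‖y‖ ≤ C := h (max n 1) (le_max_right n 1)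
  have h2 : C / ‖y‖ < ((max n 1 : ℕ) : ℝ) := lt_of_lt_of_le hn (by exact_mod_cast le_max_left n 1)
  have := (div_lt_iff₀ hny).1 h2
  linarith

lemma my_exact_of_approx {A : Type*} [NonUnitalNormedRing A] [NormedSpace ℂ A]
    [IsScalarTower ℂ A A] [SMulCommClass ℂ A A]
    {Y : Type*} [NormedAddCommGroup Y] [NormedSpace ℂ Y] [CompleteSpace Y]
    (R L : A →L[ℂ] Y →L[ℂ] Y) (σ τ : A →L[ℂ] A)
    (f : A → Y) (hf0 : f 0 = 0) (a₀ : A) (hcont : ContinuousAt f a₀)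
    (α : ℝ) (hα : 0 < α)
    (hadd : ∀ l : ℂ, ‖l‖ = 1 → ∀ a b : A, ‖f (l • a + l • b) - l • f a - l • f b‖ ≤ α)
    (hder : ∀ a b : A, ‖f (a * b) - R (σ b) (f a) - L (τ a) (f b)‖ ≤ α) :
    ∃ D : A →L[ℂ] Y, (∀ a b : A, D (a * b) = R (σ b) (D a) + L (τ a) (D b)) ∧
      ∀ a : A, ‖D a - f a‖ ≤ α := by
  have hadd1 : ∀ a b : A, ‖f (a + b) - f a - f b‖ ≤ α := by
    intro a b; simpa using hadd 1 (by simp) a b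
  have hhom1 : ∀ l : ℂ, ‖l‖ = 1 → ∀ a : A, ‖f (l • a) - l • f a‖ ≤ α := by
    intro l hl a; simpa [hf0] using hadd l hl a 0
  set u : A → ℕ → Y := fun a n => ((2 : ℂ) ^ n)⁻¹ • f ((2 : ℂ) ^ n • a) with hu
  have hnorm2 : ∀ n : ℕ, ‖((2:ℂ)^n)⁻¹‖ = ((2:ℝ)^n)⁻¹ := by
    intro n; rw [norm_inv, norm_pow]; norm_num
  have hdist : ∀ a : A, ∀ n : ℕ, dist (u a n) (u a (n+1)) ≤ α / 2 / 2 ^ n := by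
    intro a n
    set x := (2 : ℂ) ^ n • a with hxdef
    have hx : (2 : ℂ) ^ (n+1) • a = x + x := by
      rw [hxdef, pow_succ', mul_smul, two_smul]
    have key : u a n - u a (n+1) = -(((2 : ℂ) ^ (n+1))⁻¹ • (f (x + x) - f x - f x)) := by
      simp only [hu, hx, ← hxdef]
      match_scalars <;> · field_simp; try ring
    rw [dist_eq_norm, key, norm_neg, norm_smul, hnorm2]
    have hb : ‖f (x + x) - f x - f x‖ ≤ α := hadd1 x x
    rw [pow_succ]
    calc ((2:ℝ) ^ n * 2)⁻¹ * ‖f (x + x) - f x - f x‖ ≤ ((2:ℝ) ^ n * 2)⁻¹ * α := by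
          gcongr
      _ = α / 2 / 2 ^ n := by ring
  have hc : ∀ a : A, ∃ y : Y, Tendsto (u a) atTop (𝓝 y) := fun a =>
    cauchySeq_tendsto_of_complete (cauchySeq_of_le_geometric_two (hdist a))
  choose D hD using hc
  have hDf : ∀ a : A, ‖D a - f a‖ ≤ α := by
    intro a
    have h0 : u a 0 = f a := by simp [hu]
    have := dist_le_of_le_geometric_two_of_tendsto₀ (hdist a) (hD a)
    rw [h0] at this
    rwa [norm_sub_rev, ← dist_eq_norm]
  have htend0 : Tendsto (fun n : ℕ => α * ((2:ℝ)^n)⁻¹) atTop (𝓝 0) := by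
    have : Tendsto (fun n : ℕ => ((1:ℝ)/2)^n) atTop (𝓝 0) :=
      tendsto_pow_atTop_nhds_zero_of_lt_one (by norm_num) (by norm_num)
    simpa [one_div, inv_pow] using this.const_mul α
  have hD0 : D 0 = 0 := by
    have h1 : Tendsto (u 0) atTop (𝓝 0) := by
      have : u 0 = fun _ => (0 : Y) := by funext n; simp [hu, hf0]
      rw [this]; exact tendsto_const_nhds
    exact tendsto_nhds_unique (hD 0) h1
  have hDadd : ∀ a b : A, D (a + b) = D a + D b := by
    intro a b
    have t1 : Tendsto (fun n => u (a+b) n - u a n - u b n) atTop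
        (𝓝 (D (a+b) - D a - D b)) := ((hD (a+b)).sub (hD a)).sub (hD b)
    have t2 : Tendsto (fun n => u (a+b) n - u a n - u b n) atTop (𝓝 0) := by
      apply squeeze_zero_norm _ htend0
      intro n
      have hsplit : u (a+b) n - u a n - u b n
          = ((2:ℂ)^n)⁻¹ • (f ((2:ℂ)^n • a + (2:ℂ)^n • b) - f ((2:ℂ)^n • a) - f ((2:ℂ)^n • b)) := by
        simp only [hu, smul_add]
        match_scalars <;> field_simp
      rw [hsplit, norm_smul, hnorm2, mul_comm]
      gcongr
      exact hadd1 _ _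
    have := tendsto_nhds_unique t1 t2
    have h2 : D (a+b) - D a - D b = 0 := this
    abel_nf at h2 ⊢
    linear_combination (norm := abel_nf) h2
  have hDhom : ∀ l : ℂ, ‖l‖ = 1 → ∀ a : A, D (l • a) = l • D a := by
    intro l hl a
    have t1 : Tendsto (fun n => u (l • a) n - l • u a n) atTop
        (𝓝 (D (l • a) - l • D a)) := (hD (l • a)).sub ((hD a).const_smul l)
    have t2 : Tendsto (fun n => u (l • a) n - l • u a n) atTop (𝓝 0) := by
      apply squeeze_zero_norm _ htend0
      intro n
      have hsplit : u (l • a) n - l • u a n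
          = ((2:ℂ)^n)⁻¹ • (f (l • ((2:ℂ)^n • a)) - l • f ((2:ℂ)^n • a)) := by
        simp only [hu, smul_comm ((2:ℂ)^n) l]
        match_scalars <;> field_simp
      rw [hsplit, norm_smul, hnorm2, mul_comm]
      gcongr
      exact hhom1 l hl _
    have h2 : D (l • a) - l • D a = 0 := tendsto_nhds_unique t1 t2
    rw [sub_eq_zero] at h2; exact h2
  set Dh : A →+ Y := AddMonoidHom.mk' D hDadd with hDh
  obtain ⟨δ, hδ, hball⟩ := Metric.continuousAt_iff.1 hcont 1 one_pos
  set C : ℝ := 1 + 2 * α with hCdef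
  have hC : 0 < C := by positivity
  have hsmall : ∀ h : A, ‖h‖ < δ → ‖D h‖ ≤ C := by
    intro h hh
    have hb : dist (a₀ + h) a₀ < δ := by
      rw [dist_eq_norm]; simpa using hh
    have h1 : ‖f (a₀ + h) - f a₀‖ < 1 := by
      have := hball hb; rwa [dist_eq_norm] at this
    have hDsplit : D h = (D (a₀ + h) - f (a₀ + h)) + (f (a₀ + h) - f a₀) + (f a₀ - D a₀) := by
      have : D (a₀ + h) = D a₀ + D h := hDadd a₀ h
      rw [this]; abel
    rw [hDsplit]
    calc ‖(D (a₀ + h) - f (a₀ + h)) + (f (a₀ + h) - f a₀) + (f a₀ - D a₀)‖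
        ≤ ‖D (a₀ + h) - f (a₀ + h)‖ + ‖f (a₀ + h) - f a₀‖ + ‖f a₀ - D a₀‖ :=
          norm_add₃_le
      _ ≤ α + 1 + α := by
          have := hDf (a₀ + h)
          have h2 := hDf a₀
          rw [norm_sub_rev] at h2
          exact add_le_add_three this h1.le h2
      _ = C := by rw [hCdef]; ring
  have hnsmul : ∀ (n : ℕ) (a : A), D ((n : ℂ) • a) = (n : ℂ) • D a := by
    intro n a
    induction n with
    | zero => simp [hD0]
    | succ k ih =>
      have hc : ((k+1 : ℕ) : ℂ) = (k : ℂ) + 1 := by push_cast; ring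
      rw [hc, add_smul, one_smul, hDadd, ih, add_smul, one_smul]
  have hgrow : ∀ h : A, ‖D h‖ ≤ C * (2 * ‖h‖ / δ + 1) := by
    intro h
    rcases eq_or_ne h 0 with rfl | hne
    · simp only [hD0, norm_zero]
      positivity
    · have hhpos : 0 < ‖h‖ := norm_pos_iff.2 hne
      set n : ℕ := ⌈2 * ‖h‖ / δ⌉₊ with hndef
      have hn1 : 1 ≤ n := Nat.one_le_ceil_iff.2 (by positivity)
      have hn0 : (0:ℝ) < n := by exact_mod_cast hn1
      have hnc : ((n:ℂ)) ≠ 0 := by exact_mod_cast (by positivity : (n:ℝ) ≠ 0)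
      have hle : 2 * ‖h‖ / δ ≤ (n : ℝ) := Nat.le_ceil _
      have hsm : ‖((n:ℂ))⁻¹ • h‖ < δ := by
        rw [norm_smul, norm_inv, Complex.norm_natCast]
        rw [inv_mul_lt_iff₀ hn0]
        have h2d : 2 * ‖h‖ = 2 * ‖h‖ / δ * δ := (div_mul_cancel₀ _ (ne_of_gt hδ)).symm
        have h3 := mul_le_mul_of_nonneg_right hle hδ.le
        linarith
      have hDn : D h = (n : ℂ) • D (((n:ℂ))⁻¹ • h) := by
        rw [← hnsmul n (((n:ℂ))⁻¹ • h), smul_inv_smul₀ hnc]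
      rw [hDn, norm_smul, Complex.norm_natCast]
      have hub := hsmall _ hsm
      have hceil : (n : ℝ) < 2 * ‖h‖ / δ + 1 := Nat.ceil_lt_add_one (by positivity)
      calc (n:ℝ) * ‖D (((n:ℂ))⁻¹ • h)‖ ≤ (2 * ‖h‖ / δ + 1) * C :=
            mul_le_mul hceil.le hub (norm_nonneg _) (by positivity)
        _ = C * (2 * ‖h‖ / δ + 1) := mul_comm _ _
  have hbound : ∀ h : A, ‖D h‖ ≤ 2 * C / δ * ‖h‖ := by
    intro h
    refine le_of_forall_pos_le_add ?_
    intro ε hε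
    obtain ⟨m, hm⟩ := exists_nat_gt (C / ε)
    have hm0 : (0:ℝ) < m := lt_of_le_of_lt (by positivity) hm
    have := hgrow ((m : ℂ) • h)
    rw [hnsmul m h, norm_smul, Complex.norm_natCast, norm_smul, Complex.norm_natCast] at this
    have hCε : C < (m:ℝ) * ε := by
      rw [div_lt_iff₀ hε] at hm; linarith
    have e1 : C * (2 * ((m:ℝ) * ‖h‖) / δ + 1) = (m:ℝ) * (2 * C / δ * ‖h‖) + C := by
      field_simp
    rw [e1] at this
    have e2 : (m:ℝ) * (2 * C / δ * ‖h‖ + ε) = (m:ℝ) * (2 * C / δ * ‖h‖) + (m:ℝ) * ε := by ring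
    have key : (m:ℝ) * ‖D h‖ ≤ (m:ℝ) * (2 * C / δ * ‖h‖ + ε) := by rw [e2]; linarith
    exact le_of_mul_le_mul_left key hm0
  have hmapsub : ∀ a b : A, D (a - b) = D a - D b := fun a b => map_sub Dh a b
  have hcontD : Continuous D := by
    have hlip : LipschitzWith (Real.toNNReal (2 * C / δ)) D := by
      apply LipschitzWith.of_dist_le_mul
      intro x y
      rw [dist_eq_norm, dist_eq_norm, Real.coe_toNNReal _ (by positivity)]
      calc ‖D x - D y‖ = ‖D (x - y)‖ := by rw [hmapsub]
        _ ≤ 2 * C / δ * ‖x - y‖ := hbound _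
    exact hlip.continuous
  have hrsmul : ∀ (r : ℝ) (a : A), D (r • a) = r • D a := fun r a =>
    map_real_smul Dh hcontD r a
  have hCsm : ∀ (c : ℂ) (a : A), D (c • a) = c • D a := by
    intro c a
    rcases eq_or_ne c 0 with rfl | hc
    · simp [hD0]
    · have hcn : ‖c‖ ≠ 0 := norm_ne_zero_iff.2 hc
      have hnc : ((‖c‖ : ℝ) : ℂ) ≠ 0 := by exact_mod_cast hcn
      set l : ℂ := ((‖c‖ : ℝ) : ℂ)⁻¹ * c with hl
      have hl1 : ‖l‖ = 1 := by
        rw [hl, norm_mul, norm_inv, Complex.norm_real, Real.norm_eq_abs, abs_norm,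
          inv_mul_cancel₀ hcn]
      have hca : c • a = (‖c‖ : ℝ) • (l • a) := by
        rw [← Complex.coe_smul, smul_smul, hl, mul_inv_cancel_left₀ hnc]
      have hca' : c • D a = (‖c‖ : ℝ) • (l • D a) := by
        rw [← Complex.coe_smul, smul_smul, hl, mul_inv_cancel_left₀ hnc]
      rw [hca, hrsmul, hDhom l hl1, hca']
  have hbound1 : ∀ a b : A, ‖D (a*b) - R (σ b) (D a) - L (τ a) (D b)‖
      ≤ 2*α + ‖R (σ b)‖ * α + ‖L (τ a)‖ * α := by
    intro a b
    have hsplit : D (a*b) - R (σ b) (D a) - L (τ a) (D b)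
        = (D (a*b) - f (a*b)) + (f (a*b) - R (σ b) (f a) - L (τ a) (f b))
          + R (σ b) (f a - D a) + L (τ a) (f b - D b) := by
      rw [map_sub, map_sub]; abel
    rw [hsplit]
    have h1 := hDf (a*b)
    have h2 := hder a b
    have h3 : ‖R (σ b) (f a - D a)‖ ≤ ‖R (σ b)‖ * α := by
      refine le_trans ((R (σ b)).le_opNorm _) ?_
      have h5 := hDf a; rw [norm_sub_rev] at h5
      exact mul_le_mul_of_nonneg_left h5 (norm_nonneg _)
    have h4 : ‖L (τ a) (f b - D b)‖ ≤ ‖L (τ a)‖ * α := by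
      refine le_trans ((L (τ a)).le_opNorm _) ?_
      have h5 := hDf b; rw [norm_sub_rev] at h5
      exact mul_le_mul_of_nonneg_left h5 (norm_nonneg _)
    refine le_trans (norm_add_le _ _) ?_
    refine le_trans (add_le_add norm_add₃_le le_rfl) ?_
    linarith
  have hderD : ∀ a b : A, D (a * b) = R (σ b) (D a) + L (τ a) (D b) := by
    intro a b
    have hzero : D (a*b) - R (σ b) (D a) - L (τ a) (D b) = 0 := by
      apply my_norm_eq_zero_of_forall_mul_le _ (2*α + (‖R (σ b)‖ + ‖L (τ a)‖) * α)
      intro n hn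
      have hn0 : (0:ℝ) < n := by exact_mod_cast hn
      have hn1 : (1:ℝ) ≤ n := by exact_mod_cast hn
      have hb1 := hbound1 ((n:ℂ) • a) ((n:ℂ) • b)
      have e1 : ((n:ℂ) • a) * ((n:ℂ) • b) = (n:ℂ) • ((n:ℂ) • (a * b)) := by
        rw [smul_mul_assoc, mul_smul_comm]
      have e2 : D (((n:ℂ) • a) * ((n:ℂ) • b)) = (n:ℂ) • ((n:ℂ) • D (a*b)) := by
        rw [e1, hCsm, hCsm]
      have e3 : R (σ ((n:ℂ) • b)) (D ((n:ℂ) • a)) = (n:ℂ) • ((n:ℂ) • R (σ b) (D a)) := by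
        rw [map_smul, map_smul, hCsm, ContinuousLinearMap.smul_apply, map_smul]
      have e4 : L (τ ((n:ℂ) • a)) (D ((n:ℂ) • b)) = (n:ℂ) • ((n:ℂ) • L (τ a) (D b)) := by
        rw [map_smul, map_smul, hCsm, ContinuousLinearMap.smul_apply, map_smul]
      have e5 : ‖R (σ ((n:ℂ) • b))‖ = (n:ℝ) * ‖R (σ b)‖ := by
        rw [map_smul, map_smul]
        simpa using norm_smul ((n:ℂ)) (R (σ b))
      have e6 : ‖L (τ ((n:ℂ) • a))‖ = (n:ℝ) * ‖L (τ a)‖ := by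
        rw [map_smul, map_smul]
        simpa using norm_smul ((n:ℂ)) (L (τ a))
      rw [e2, e3, e4, e5, e6] at hb1
      have e7 : (n:ℂ) • ((n:ℂ) • D (a*b)) - (n:ℂ) • ((n:ℂ) • R (σ b) (D a))
          - (n:ℂ) • ((n:ℂ) • L (τ a) (D b))
          = (n:ℂ) • ((n:ℂ) • (D (a*b) - R (σ b) (D a) - L (τ a) (D b))) := by
        rw [smul_sub, smul_sub, smul_sub, smul_sub]
      rw [e7, norm_smul, norm_smul, Complex.norm_natCast] at hb1
      set g := ‖D (a*b) - R (σ b) (D a) - L (τ a) (D b)‖ with hg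
      set S1 := ‖R (σ b)‖ with hS1
      set S2 := ‖L (τ a)‖ with hS2
      have hg0 : 0 ≤ g := norm_nonneg _
      have hS10 : 0 ≤ S1 := norm_nonneg _
      have hS20 : 0 ≤ S2 := norm_nonneg _
      have expand : (n:ℝ) * (2*α + (S1 + S2) * α)
          = (n:ℝ)*(2*α) + (n:ℝ)*S1*α + (n:ℝ)*S2*α := by ring
      have h2 : 2*α ≤ (n:ℝ) * (2*α) := le_mul_of_one_le_left (by positivity) hn1
      have step : (n:ℝ) * ((n:ℝ) * g) ≤ (n:ℝ) * (2*α + (S1 + S2) * α) := by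
        refine hb1.trans ?_
        rw [expand]
        have e8 : ↑n * S1 * α = (n:ℝ)*S1*α := by ring
        have e9 : ↑n * S2 * α = (n:ℝ)*S2*α := by ring
        linarith
      exact le_of_mul_le_mul_left step hn0
    rw [sub_sub, sub_eq_zero] at hzero
    exact hzero
  let Dlin : A →ₗ[ℂ] Y :=
    { toFun := D
      map_add' := hDadd
      map_smul' := hCsm }
  refine ⟨Dlin.mkContinuous (2 * C / δ) hbound, ?_, ?_⟩
  · intro a b; exact hderD a b
  · intro a; exact hDf a

/-- Theorem 3.2 of the paper: a complex Banach algebra `A` is approximately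
`(σ-τ)`-amenable if and only if it is `(σ-τ)`-amenable.  Amenability is phrased in
terms of derivations into the dual `X* = X →L[ℂ] ℂ` of a Banach `A`-bimodule `X`,
equipped with its canonical dual bimodule structure. -/
theorem approx_sigma_tau_amenable_iff_sigma_tau_amenable
    {A : Type*} [NonUnitalNormedRing A] [NormedSpace ℂ A]
    [IsScalarTower ℂ A A] [SMulCommClass ℂ A A] [CompleteSpace A]
    (σ τ : A →L[ℂ] A)
    (hσ : ∀ a b : A, σ (a * b) = σ a * σ b) (hτ : ∀ a b : A, τ (a * b) = τ a * τ b) :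
    (∀ (X : Type) [NormedAddCommGroup X] [NormedSpace ℂ X] [CompleteSpace X]
      (M : BanachBimodule A X) (f : A → (X →L[ℂ] ℂ)),
      IsApproxSigmaTauDerivation M.dual σ τ f →
      ∃ β : ℝ, 0 < β ∧ ∃ x : X →L[ℂ] ℂ, ∀ a : A,
        ‖M.dual.rsmul (σ a) x - M.dual.lsmul (τ a) x - f a‖ ≤ β) ↔
    (∀ (X : Type) [NormedAddCommGroup X] [NormedSpace ℂ X] [CompleteSpace X]
      (M : BanachBimodule A X) (d : A →L[ℂ] (X →L[ℂ] ℂ)),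
      (∀ a b : A, d (a * b) = M.dual.rsmul (σ b) (d a) + M.dual.lsmul (τ a) (d b)) →
      ∃ x : X →L[ℂ] ℂ, ∀ a : A, d a = M.dual.rsmul (σ a) x - M.dual.lsmul (τ a) x) := by
  constructor
  · intro h X _ _ _ M d hd
    have happrox : IsApproxSigmaTauDerivation M.dual σ τ d := by
      refine ⟨map_zero d, ⟨0, d.continuous.continuousAt⟩, 1, one_pos, ?_, ?_⟩
      · intro l hl a b
        have e : d (l • a + l • b) - l • d a - l • d b = 0 := by
          rw [map_add, map_smul, map_smul]; abel
        rw [e, norm_zero]; norm_num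
      · intro a b
        have e : d (a * b) - M.dual.rsmul (σ b) (d a) - M.dual.lsmul (τ a) (d b) = 0 := by
          rw [hd a b]; abel
        rw [e, norm_zero]; norm_num
    obtain ⟨β, hβ, x, hx⟩ := h X M d happrox
    refine ⟨x, fun a => ?_⟩
    have hzero : M.dual.rsmul (σ a) x - M.dual.lsmul (τ a) x - d a = 0 := by
      apply my_norm_eq_zero_of_forall_mul_le _ β
      intro n hn
      have hx' := hx ((n:ℂ) • a)
      have e1 : M.dual.rsmul (σ ((n:ℂ) • a)) x = (n:ℂ) • (M.dual.rsmul (σ a) x) := by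
        rw [map_smul, map_smul, ContinuousLinearMap.smul_apply]
      have e2 : M.dual.lsmul (τ ((n:ℂ) • a)) x = (n:ℂ) • (M.dual.lsmul (τ a) x) := by
        rw [map_smul, map_smul, ContinuousLinearMap.smul_apply]
      have e3 : d ((n:ℂ) • a) = (n:ℂ) • d a := map_smul d _ _
      rw [e1, e2, e3] at hx'
      have e4 : (n:ℂ) • (M.dual.rsmul (σ a) x) - (n:ℂ) • (M.dual.lsmul (τ a) x)
          - (n:ℂ) • d a
          = (n:ℂ) • (M.dual.rsmul (σ a) x - M.dual.lsmul (τ a) x - d a) := by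
        rw [smul_sub, smul_sub]
      rw [e4] at hx'
      have e5 : ‖(n:ℂ) • (M.dual.rsmul (σ a) x - M.dual.lsmul (τ a) x - d a)‖
          = (n:ℝ) * ‖M.dual.rsmul (σ a) x - M.dual.lsmul (τ a) x - d a‖ := by
        simpa using norm_smul ((n:ℂ)) (M.dual.rsmul (σ a) x - M.dual.lsmul (τ a) x - d a)
      rw [e5] at hx'
      exact hx'
    have h2 : M.dual.rsmul (σ a) x = M.dual.lsmul (τ a) x + d a :=
      sub_eq_zero.1 (by rw [← sub_sub]; exact hzero)
    rw [h2]; abel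
  · intro h X _ _ _ M f hf
    obtain ⟨hf0, ⟨a₀, hcont⟩, α, hα, hadd, hder⟩ := hf
    obtain ⟨D, hDder, hDf⟩ :=
      my_exact_of_approx M.dual.rsmul M.dual.lsmul σ τ f hf0 a₀ hcont α hα hadd hder
    obtain ⟨x, hx⟩ := h X M D hDder
    refine ⟨α, hα, x, fun a => ?_⟩
    rw [← hx a]
    exact hDf a
end

section
/- Let A be a complex normed algebra, X a complex Banach space, f : A → X a map with f(0) = 0, and φ : A × A → [0,∞) a function such that φ̃(a,b) := (1/2)·Σ_{n=0}^∞ 2^{-n} φ(2ⁿa, 2ⁿb) < ∞ for all a,b ∈ A and ‖f(a+b) − f(a) − f(b)‖ ≤ φ(a,b) for all a,b ∈ A. Then for every a ∈ A the sequence (2^{-n} f(2ⁿ a))_{n≥0} is Cauchy, hence converges to a limit d(a); the map d : A → X is additive (d(a+b) = d(a) + d(b)); ‖f(a) − d(a)‖ ≤ φ̃(a,a) for all a ∈ A; and d is the unique additive map satisfying this bound. -/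
open Filter Topology

/-- The Gǎvruta-type stability of additive maps used in the paper: if
`‖f(a+b) − f(a) − f(b)‖ ≤ φ(a,b)` and `φ̃(a,b) = (1/2) ∑ 2⁻ⁿ φ(2ⁿa, 2ⁿb) < ∞`, then
for each `a` the sequence `2⁻ⁿ f(2ⁿ a)` is Cauchy and converges to `d(a)`, where `d`
is additive, satisfies `‖f(a) − d(a)‖ ≤ φ̃(a,a)`, and is the unique additive map with
this property. -/
theorem gavruta_stability_of_additive_maps
    {A : Type*} [NonUnitalNormedRing A] [NormedSpace ℂ A]
    [IsScalarTower ℂ A A] [SMulCommClass ℂ A A]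
    {X : Type*} [NormedAddCommGroup X] [NormedSpace ℂ X] [CompleteSpace X]
    (f : A → X) (hf0 : f 0 = 0)
    (φ : A → A → ℝ) (hφ_nonneg : ∀ a b, 0 ≤ φ a b)
    (hφ_sum : ∀ a b : A,
      Summable fun n : ℕ => ((2 : ℝ) ^ n)⁻¹ * φ ((2 : ℂ) ^ n • a) ((2 : ℂ) ^ n • b))
    (φt : A → A → ℝ)
    (hφt : ∀ a b : A, φt a b =
      (1 / 2) * ∑' n : ℕ, ((2 : ℝ) ^ n)⁻¹ * φ ((2 : ℂ) ^ n • a) ((2 : ℂ) ^ n • b))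
    (hf_add : ∀ a b : A, ‖f (a + b) - f a - f b‖ ≤ φ a b) :
    (∀ a : A, CauchySeq fun n : ℕ => ((2 : ℂ) ^ n)⁻¹ • f ((2 : ℂ) ^ n • a)) ∧
    ∃ d : A → X,
      (∀ a : A, Tendsto (fun n : ℕ => ((2 : ℂ) ^ n)⁻¹ • f ((2 : ℂ) ^ n • a))
        atTop (𝓝 (d a))) ∧
      (∀ a b : A, d (a + b) = d a + d b) ∧
      (∀ a : A, ‖f a - d a‖ ≤ φt a a) ∧
      (∀ d' : A → X, (∀ a b : A, d' (a + b) = d' a + d' b) →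
        (∀ a : A, ‖f a - d' a‖ ≤ φt a a) → d' = d) := by
  set g : A → ℕ → X := fun a n => ((2 : ℂ) ^ n)⁻¹ • f ((2 : ℂ) ^ n • a) with hg
  have h2ne : ∀ n : ℕ, ((2:ℂ)^n) ≠ 0 := fun n => pow_ne_zero _ two_ne_zero
  have hpow : ∀ (n : ℕ) (a : A),
      (2:ℂ)^(n+1) • a = (2:ℂ)^n • a + (2:ℂ)^n • a := by
    intro n a
    rw [pow_succ, mul_comm, mul_smul, two_smul]
  have hnorm2 : ∀ n : ℕ, ‖((2:ℂ)^n)⁻¹‖ = ((2:ℝ)^n)⁻¹ := by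
    intro n; simp
  -- the distance estimate between consecutive terms
  have key : ∀ (a : A) (n : ℕ),
      dist (g a n) (g a (n+1))
        ≤ (1/2) * (((2:ℝ)^n)⁻¹ * φ ((2:ℂ)^n • a) ((2:ℂ)^n • a)) := by
    intro a n
    have h1 := hf_add ((2:ℂ)^n • a) ((2:ℂ)^n • a)
    rw [dist_eq_norm]
    have heq : g a n - g a (n+1)
        = ((2:ℂ)^(n+1))⁻¹ • (f ((2:ℂ)^n • a) + f ((2:ℂ)^n • a)
            - f ((2:ℂ)^n • a + (2:ℂ)^n • a)) := by
      rw [hg]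
      simp only [← hpow n a]
      rw [smul_sub, smul_add]
      match_scalars <;> (field_simp; try ring)
    have hnn : ‖f ((2:ℂ)^n • a) + f ((2:ℂ)^n • a)
            - f ((2:ℂ)^n • a + (2:ℂ)^n • a)‖
        = ‖f ((2:ℂ)^n • a + (2:ℂ)^n • a) - f ((2:ℂ)^n • a) - f ((2:ℂ)^n • a)‖ := by
      rw [← norm_neg]; congr 1; abel
    rw [heq, norm_smul, hnorm2, hnn]
    calc ((2:ℝ)^(n+1))⁻¹ * ‖f ((2:ℂ)^n • a + (2:ℂ)^n • a) - f ((2:ℂ)^n • a) - f ((2:ℂ)^n • a)‖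
        ≤ ((2:ℝ)^(n+1))⁻¹ * φ ((2:ℂ)^n • a) ((2:ℂ)^n • a) := by
          apply mul_le_mul_of_nonneg_left h1 (by positivity)
      _ = (1/2) * (((2:ℝ)^n)⁻¹ * φ ((2:ℂ)^n • a) ((2:ℂ)^n • a)) := by ring
  have hsum' : ∀ a : A, Summable fun n : ℕ =>
      (1/2) * (((2:ℝ)^n)⁻¹ * φ ((2:ℂ)^n • a) ((2:ℂ)^n • a)) :=
    fun a => (hφ_sum a a).mul_left (1/2)
  have hcauchy : ∀ a : A, CauchySeq (g a) := fun a =>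
    cauchySeq_of_dist_le_of_summable _ (key a) (hsum' a)
  choose d hd using fun a : A => cauchySeq_tendsto_of_complete (hcauchy a)
  have hg0 : ∀ a : A, g a 0 = f a := by intro a; simp [hg]
  -- the bound
  have hbound : ∀ a : A, ‖f a - d a‖ ≤ φt a a := by
    intro a
    have h := dist_le_tsum_of_dist_le_of_tendsto₀ _ (key a) (hsum' a) (hd a)
    rw [hg0 a, dist_eq_norm] at h
    rw [hφt]
    rwa [tsum_mul_left] at h
  -- additivity
  have hadd : ∀ a b : A, d (a + b) = d a + d b := by
    intro a b
    have h1 : Tendsto (fun n => g (a+b) n - g a n - g b n) atTop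
        (𝓝 (d (a+b) - d a - d b)) := ((hd (a+b)).sub (hd a)).sub (hd b)
    have h2 : Tendsto (fun n => g (a+b) n - g a n - g b n) atTop (𝓝 0) := by
      apply squeeze_zero_norm (fun n => ?_) (hφ_sum a b).tendsto_atTop_zero
      have heq : g (a+b) n - g a n - g b n
          = ((2:ℂ)^n)⁻¹ • (f ((2:ℂ)^n • a + (2:ℂ)^n • b)
              - f ((2:ℂ)^n • a) - f ((2:ℂ)^n • b)) := by
        simp [hg, smul_add, smul_sub]
      rw [heq, norm_smul, hnorm2]
      exact mul_le_mul_of_nonneg_left (hf_add _ _) (by positivity)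
    have h3 : d (a+b) - d a - d b = 0 := tendsto_nhds_unique h1 h2
    rw [sub_sub] at h3
    exact sub_eq_zero.mp h3
  refine ⟨hcauchy, d, hd, hadd, hbound, ?_⟩
  -- uniqueness
  intro d' hd'add hd'bound
  funext a
  have hscale : ∀ (n : ℕ), d' ((2:ℂ)^n • a) = (2:ℂ)^n • d' a := by
    intro n
    induction n with
    | zero => simp
    | succ n ih =>
      rw [hpow n a, hd'add, ih, pow_succ, mul_comm, mul_smul, two_smul]
  set c : ℕ → ℝ := fun k => ((2:ℝ)^k)⁻¹ * φ ((2:ℂ)^k • a) ((2:ℂ)^k • a) with hc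
  have hu : ∀ n : ℕ, ((2:ℝ)^n)⁻¹ * φt ((2:ℂ)^n • a) ((2:ℂ)^n • a)
      = (1/2) * ∑' m : ℕ, c (m + n) := by
    intro n
    rw [hφt, mul_left_comm, ← tsum_mul_left]
    congr 1
    apply tsum_congr
    intro m
    rw [hc]
    simp only [smul_smul, ← pow_add]
    rw [pow_add (2:ℝ) m n, mul_inv]
    ring
  have htend0 : Tendsto (fun n : ℕ =>
      ((2:ℝ)^n)⁻¹ * φt ((2:ℂ)^n • a) ((2:ℂ)^n • a)) atTop (𝓝 0) := by
    simp only [hu]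
    have := (tendsto_sum_nat_add c).const_mul (1/2 : ℝ)
    simpa using this
  have htend : Tendsto (g a) atTop (𝓝 (d' a)) := by
    rw [tendsto_iff_norm_sub_tendsto_zero]
    apply squeeze_zero_norm (fun n => ?_) htend0
    have heq : g a n - d' a
        = ((2:ℂ)^n)⁻¹ • (f ((2:ℂ)^n • a) - d' ((2:ℂ)^n • a)) := by
      rw [hscale, smul_sub, inv_smul_smul₀ (h2ne n)]
    rw [norm_norm, heq, norm_smul, hnorm2]
    exact mul_le_mul_of_nonneg_left (hd'bound _) (by positivity)
  exact tendsto_nhds_unique htend (hd a)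
end

section
/- Let A be a complex normed algebra, X a Banach A-bimodule, σ, τ : A → A maps, and d : A → X a (σ-τ)-derivation, i.e. d(ab) = d(a)σ(b) + τ(a)d(b) for all a,b ∈ A. If τ is multiplicative (τ(ab) = τ(a)τ(b) for all a,b ∈ A), then for all a,b,c ∈ A one has d(c)·(σ(ab) − σ(a)σ(b)) = 0 in X. -/
/-- The key computation in Theorem 2.1(i) of the paper: if `d` is a
`(σ-τ)`-derivation and `τ` is multiplicative, then
`d(c)·(σ(ab) − σ(a)σ(b)) = 0` for all `a, b, c`. -/
theorem derivation_annihilates_sigma_defect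
    {A : Type*} [NonUnitalNormedRing A] [NormedSpace ℂ A]
    [IsScalarTower ℂ A A] [SMulCommClass ℂ A A]
    {X : Type*} [NormedAddCommGroup X] [NormedSpace ℂ X] [CompleteSpace X]
    (M : BanachBimodule A X) (σ τ : A → A) (d : A → X)
    (hd : ∀ a b : A, d (a * b) = M.rsmul (σ b) (d a) + M.lsmul (τ a) (d b))
    (hτ : ∀ a b : A, τ (a * b) = τ a * τ b) :
    ∀ a b c : A, M.rsmul (σ (a * b) - σ a * σ b) (d c) = 0 := by
  intro a b c
  have h1 : d (c * (a * b)) = d ((c * a) * b) := by rw [mul_assoc]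
  rw [hd c (a * b), hd (c * a) b, hd c a, hd a b, hτ c a] at h1
  simp only [map_add, ContinuousLinearMap.add_apply, M.lsmul_mul, M.middle] at h1
  have key : M.rsmul (σ (a * b)) (d c) = M.rsmul (σ a * σ b) (d c) := by
    rw [M.rsmul_mul]
    linear_combination (norm := abel_nf) h1
  rw [map_sub, ContinuousLinearMap.sub_apply, key, sub_self]
end

section
/- Let A be a complex normed algebra, X a Banach A-bimodule, f : A → X, g₁, g₂ : A → A, and φ : A × A → [0,∞) a function with lim_{n→∞} 2^{-2n} φ(2ⁿa, 2ⁿb) = 0 for all a,b ∈ A. Suppose the limits d(a) := lim_{n→∞} 2^{-n} f(2ⁿa), σ(a) := lim_{n→∞} 2^{-n} g₁(2ⁿa), and τ(a) := lim_{n→∞} 2^{-n} g₂(2ⁿa) exist for every a ∈ A, and that ‖f(ab) − f(a)g₁(b) − g₂(a)f(b)‖ ≤ φ(a,b) for all a,b ∈ A. Then d(ab) = d(a)σ(b) + τ(a)d(b) for all a,b ∈ A. -/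
open Filter Topology

set_option maxHeartbeats 1000000 in
/-- The limit maps `d`, `σ`, `τ` of the approximate data `f`, `g₁`, `g₂` satisfy the
`(σ-τ)`-derivation identity `d(ab) = d(a)σ(b) + τ(a)d(b)`, provided
`2^{-2n} φ(2ⁿa, 2ⁿb) → 0` and `‖f(ab) − f(a)g₁(b) − g₂(a)f(b)‖ ≤ φ(a,b)`. -/
theorem limit_map_is_sigma_tau_derivation
    {A : Type*} [NonUnitalNormedRing A] [NormedSpace ℂ A]
    [IsScalarTower ℂ A A] [SMulCommClass ℂ A A]
    {X : Type*} [NormedAddCommGroup X] [NormedSpace ℂ X] [CompleteSpace X]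
    (M : BanachBimodule A X)
    (f : A → X) (g₁ g₂ : A → A)
    (φ : A → A → ℝ)
    (hφ_lim : ∀ a b : A,
      Tendsto (fun n : ℕ => ((2 : ℝ) ^ (2 * n))⁻¹ * φ ((2 : ℂ) ^ n • a) ((2 : ℂ) ^ n • b))
        atTop (𝓝 0))
    (d : A → X) (σ τ : A → A)
    (hd_lim : ∀ a : A, Tendsto (fun n : ℕ => ((2 : ℂ) ^ n)⁻¹ • f ((2 : ℂ) ^ n • a))
      atTop (𝓝 (d a)))
    (hσ_lim : ∀ a : A, Tendsto (fun n : ℕ => ((2 : ℂ) ^ n)⁻¹ • g₁ ((2 : ℂ) ^ n • a))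
      atTop (𝓝 (σ a)))
    (hτ_lim : ∀ a : A, Tendsto (fun n : ℕ => ((2 : ℂ) ^ n)⁻¹ • g₂ ((2 : ℂ) ^ n • a))
      atTop (𝓝 (τ a)))
    (hf_mul : ∀ a b : A,
      ‖f (a * b) - M.rsmul (g₁ b) (f a) - M.lsmul (g₂ a) (f b)‖ ≤ φ a b) :
    ∀ a b : A, d (a * b) = M.rsmul (σ b) (d a) + M.lsmul (τ a) (d b) := by

  intro a b
  -- the subsequence `n ↦ 2n` of the limit defining `d (a*b)`
  have h2n : Tendsto (fun n : ℕ => 2 * n) atTop atTop :=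
    tendsto_atTop_atTop_of_monotone
      (fun m n h => by omega) (fun n => ⟨n, by omega⟩)
  have hF : Tendsto
      (fun n : ℕ => ((2 : ℂ) ^ (2 * n))⁻¹ • f ((2 : ℂ) ^ (2 * n) • (a * b)))
      atTop (𝓝 (d (a * b))) := (hd_lim (a * b)).comp h2n
  -- the "approximating" sequence
  set G : ℕ → X := fun n =>
    M.rsmul (((2 : ℂ) ^ n)⁻¹ • g₁ ((2 : ℂ) ^ n • b)) (((2 : ℂ) ^ n)⁻¹ • f ((2 : ℂ) ^ n • a)) +
    M.lsmul (((2 : ℂ) ^ n)⁻¹ • g₂ ((2 : ℂ) ^ n • a)) (((2 : ℂ) ^ n)⁻¹ • f ((2 : ℂ) ^ n • b))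
    with hG
  have hGlim : Tendsto G atTop (𝓝 (M.rsmul (σ b) (d a) + M.lsmul (τ a) (d b))) := by
    apply Tendsto.add
    · exact (M.rsmul.continuous₂.tendsto (σ b, d a)).comp ((hσ_lim b).prodMk_nhds (hd_lim a))
    · exact (M.lsmul.continuous₂.tendsto (τ a, d b)).comp ((hτ_lim a).prodMk_nhds (hd_lim b))
  -- the difference tends to 0
  have key : ∀ n : ℕ,
      ‖((2 : ℂ) ^ (2 * n))⁻¹ • f ((2 : ℂ) ^ (2 * n) • (a * b)) - G n‖ ≤
      ((2 : ℝ) ^ (2 * n))⁻¹ * φ ((2 : ℂ) ^ n • a) ((2 : ℂ) ^ n • b) := by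
    intro n
    have hsm : (2 : ℂ) ^ (2 * n) • (a * b) = ((2 : ℂ) ^ n • a) * ((2 : ℂ) ^ n • b) := by
      rw [smul_mul_smul_comm, ← pow_add, two_mul]
    have hGn : G n = ((2 : ℂ) ^ (2 * n))⁻¹ •
        (M.rsmul (g₁ ((2 : ℂ) ^ n • b)) (f ((2 : ℂ) ^ n • a)) +
         M.lsmul (g₂ ((2 : ℂ) ^ n • a)) (f ((2 : ℂ) ^ n • b))) := by
      rw [hG]
      simp only [map_smul, ContinuousLinearMap.smul_apply, ContinuousLinearMap.map_smul,
        smul_smul, smul_add, ← mul_inv, ← pow_add, two_mul]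
    rw [hGn, hsm, ← smul_sub, norm_smul, sub_add_eq_sub_sub]
    have h1 : ‖((2 : ℂ) ^ (2 * n))⁻¹‖ = ((2 : ℝ) ^ (2 * n))⁻¹ := by
      simp
    rw [h1]
    exact mul_le_mul_of_nonneg_left (hf_mul _ _) (by positivity)
  have hdiff : Tendsto
      (fun n : ℕ => ((2 : ℂ) ^ (2 * n))⁻¹ • f ((2 : ℂ) ^ (2 * n) • (a * b)) - G n)
      atTop (𝓝 0) := by
    apply squeeze_zero_norm key (hφ_lim a b)
  have : Tendsto (fun n : ℕ => ((2 : ℂ) ^ (2 * n))⁻¹ • f ((2 : ℂ) ^ (2 * n) • (a * b)))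
      atTop (𝓝 (M.rsmul (σ b) (d a) + M.lsmul (τ a) (d b))) := by
    have := hdiff.add hGlim
    simpa using this
  exact tendsto_nhds_unique hF this
end

section
/- Let A be a complex normed algebra, g : A → A a map with g(0) = 0, and φ : A × A → [0,∞) a function with φ̃(a,b) := (1/2)·Σ_{n=0}^∞ 2^{-n} φ(2ⁿa, 2ⁿb) < ∞ for all a,b ∈ A. Suppose the limit τ(a) := lim_{n→∞} 2^{-n} g(2ⁿa) exists for every a ∈ A and that ‖g(ab) − g(a)g(b)‖ ≤ φ(a,b) for all a,b ∈ A. Then τ is multiplicative: τ(ab) = τ(a)τ(b) for all a,b ∈ A. -/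
open Filter Topology

/-- If `g : A → A` is approximately multiplicative, `‖g(ab) − g(a)g(b)‖ ≤ φ(a,b)`,
with `φ̃(a,b) = (1/2) ∑ 2⁻ⁿ φ(2ⁿa, 2ⁿb) < ∞`, and the limit
`τ(a) = lim 2⁻ⁿ g(2ⁿ a)` exists for each `a`, then `τ` is multiplicative. -/
theorem limit_map_is_multiplicative
    {A : Type*} [NonUnitalNormedRing A] [NormedSpace ℂ A]
    [IsScalarTower ℂ A A] [SMulCommClass ℂ A A]
    (g : A → A) (hg0 : g 0 = 0)
    (φ : A → A → ℝ) (hφ_nonneg : ∀ a b, 0 ≤ φ a b)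
    (hφ_sum : ∀ a b : A,
      Summable fun n : ℕ => ((2 : ℝ) ^ n)⁻¹ * φ ((2 : ℂ) ^ n • a) ((2 : ℂ) ^ n • b))
    (τ : A → A)
    (hτ_lim : ∀ a : A, Tendsto (fun n : ℕ => ((2 : ℂ) ^ n)⁻¹ • g ((2 : ℂ) ^ n • a))
      atTop (𝓝 (τ a)))
    (hg_mul : ∀ a b : A, ‖g (a * b) - g a * g b‖ ≤ φ a b) :
    ∀ a b : A, τ (a * b) = τ a * τ b := by
  intro a b
  have h2n : Tendsto (fun n : ℕ => 2 * n) atTop atTop :=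
    tendsto_atTop_atTop_of_monotone (fun m k h => by omega) (fun c => ⟨c, by omega⟩)
  have hf : Tendsto (fun n : ℕ => ((2 : ℂ) ^ (2 * n))⁻¹ • g ((2 : ℂ) ^ (2 * n) • (a * b)))
      atTop (𝓝 (τ (a * b))) := (hτ_lim (a * b)).comp h2n
  have hh : Tendsto (fun n : ℕ =>
      (((2 : ℂ) ^ n)⁻¹ • g ((2 : ℂ) ^ n • a)) * (((2 : ℂ) ^ n)⁻¹ • g ((2 : ℂ) ^ n • b)))
      atTop (𝓝 (τ a * τ b)) := (hτ_lim a).mul (hτ_lim b)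
  have key : ∀ n : ℕ,
      ‖((2 : ℂ) ^ (2 * n))⁻¹ • g ((2 : ℂ) ^ (2 * n) • (a * b)) -
        (((2 : ℂ) ^ n)⁻¹ • g ((2 : ℂ) ^ n • a)) * (((2 : ℂ) ^ n)⁻¹ • g ((2 : ℂ) ^ n • b))‖
      ≤ ((2 : ℝ) ^ n)⁻¹ * φ ((2 : ℂ) ^ n • a) ((2 : ℂ) ^ n • b) := by
    intro n
    have hpow : ((2 : ℂ) ^ (2 * n)) = (2 : ℂ) ^ n * (2 : ℂ) ^ n := by
      rw [two_mul, pow_add]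
    have e1 : (((2 : ℂ) ^ n)⁻¹ • g ((2 : ℂ) ^ n • a)) * (((2 : ℂ) ^ n)⁻¹ • g ((2 : ℂ) ^ n • b))
        = ((2 : ℂ) ^ (2 * n))⁻¹ • (g ((2 : ℂ) ^ n • a) * g ((2 : ℂ) ^ n • b)) := by
      rw [smul_mul_smul_comm, hpow, mul_inv]
    have e2 : (2 : ℂ) ^ (2 * n) • (a * b) = ((2 : ℂ) ^ n • a) * ((2 : ℂ) ^ n • b) := by
      rw [smul_mul_smul_comm, hpow]
    rw [e1, ← smul_sub, norm_smul, e2]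
    have hnorm : ‖((2 : ℂ) ^ (2 * n))⁻¹‖ = ((2 : ℝ) ^ (2 * n))⁻¹ := by
      rw [norm_inv, norm_pow, Complex.norm_ofNat]
    rw [hnorm]
    apply mul_le_mul
    · exact inv_anti₀ (by positivity) (pow_le_pow_right₀ (by norm_num) (by omega))
    · exact hg_mul _ _
    · exact norm_nonneg _
    · positivity
  have hbound : Tendsto (fun n : ℕ => ((2 : ℝ) ^ n)⁻¹ * φ ((2 : ℂ) ^ n • a) ((2 : ℂ) ^ n • b))
      atTop (𝓝 0) := (hφ_sum a b).tendsto_atTop_zero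
  have hdiff : Tendsto (fun n : ℕ =>
      ((2 : ℂ) ^ (2 * n))⁻¹ • g ((2 : ℂ) ^ (2 * n) • (a * b)) -
        (((2 : ℂ) ^ n)⁻¹ • g ((2 : ℂ) ^ n • a)) * (((2 : ℂ) ^ n)⁻¹ • g ((2 : ℂ) ^ n • b)))
      atTop (𝓝 0) := squeeze_zero_norm key hbound
  exact sub_eq_zero.mp (tendsto_nhds_unique (hf.sub hh) hdiff)
end
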